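/- arXiv:2006.07503 — 6 statements merged into one kernel-verified Lean document; each statement's English description precedes it below -/
import Mathlib

section
/- Let V be nonempty closed convex, ψ strictly convex and differentiable, and for t = 1,…,T let x_{t+1} = argmin_{x ∈ V} B_ψ(x, x_t) + η_t·ℓ_t(x) with convex losses ℓ_t and η_t > 0. Then for every u ∈ V: ∑_{t=1}^T [ℓ_t(x_{t+1}) − ℓ_t(u)] ≤ ∑_{t=1}^T [B_ψ(u, x_t) − B_ψ(u, x_{t+1})]/η_t − ∑_{t=1}^T B_ψ(x_{t+1}, x_t)/η_t. -/
open Finset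

/-- The Bregman divergence of `ψ` with gradient `Dψ`. -/
noncomputable def breg {E : Type*} [NormedAddCommGroup E] [InnerProductSpace ℝ E]
    (ψ : E → ℝ) (Dψ : E → E) (x y : E) : ℝ :=
  ψ x - ψ y - (inner ℝ (Dψ y) (x - y) : ℝ)

theorem iomd_step {d : ℕ} {V : Set (EuclideanSpace ℝ (Fin d))} (hVcv : Convex ℝ V)
    {ψ : EuclideanSpace ℝ (Fin d) → ℝ} {Dψ : EuclideanSpace ℝ (Fin d) → EuclideanSpace ℝ (Fin d)}
    (hgrad : ∀ x, HasGradientAt ψ (Dψ x) x)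
    {ℓ : EuclideanSpace ℝ (Fin d) → ℝ} (hℓ : ConvexOn ℝ Set.univ ℓ)
    {η : ℝ} (hη : 0 < η)
    {a b u : EuclideanSpace ℝ (Fin d)} (hb : b ∈ V) (hu : u ∈ V)
    (hmin : ∀ y ∈ V, breg ψ Dψ b a + η * ℓ b ≤ breg ψ Dψ y a + η * ℓ y) :
    η * (ℓ b - ℓ u) ≤ (inner ℝ (Dψ b) (u - b) : ℝ) - (inner ℝ (Dψ a) (u - b) : ℝ) := by
  set v := u - b with hv
  have hline : HasDerivAt (fun t : ℝ => b + t • v) v 0 := by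
    simpa using ((hasDerivAt_id (0:ℝ)).smul_const v).const_add b
  have hg : HasDerivAt (fun t : ℝ => ψ (b + t • v)) (inner ℝ (Dψ b) v : ℝ) 0 := by
    have h1 : HasFDerivAt ψ ((InnerProductSpace.toDual ℝ (EuclideanSpace ℝ (Fin d))) (Dψ b)) (b + (0:ℝ) • v) := by simpa using (hgrad b).hasFDerivAt
    have := h1.comp_hasDerivAt 0 hline
    exact this
  have hslope := hasDerivAt_iff_tendsto_slope.mp hg
  have hslope' : Filter.Tendsto (slope (fun t : ℝ => ψ (b + t • v)) 0) (nhdsWithin 0 (Set.Ioi 0))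
      (nhds (inner ℝ (Dψ b) v : ℝ)) :=
    hslope.mono_left (nhdsWithin_mono 0 (fun t ht => ne_of_gt ht))
  have key : η * (ℓ b - ℓ u) + (inner ℝ (Dψ a) v : ℝ) ≤ (inner ℝ (Dψ b) v : ℝ) := by
    refine ge_of_tendsto hslope' ?_
    filter_upwards [Ioo_mem_nhdsGT_of_mem (by norm_num : (0:ℝ) ∈ Set.Ico 0 1)] with t ht
    obtain ⟨ht0, ht1⟩ := ht
    have hy : b + t • v = (1 - t) • b + t • u := by rw [hv]; module
    have hyV : (1 - t) • b + t • u ∈ V := hVcv hb hu (by linarith) ht0.le (by ring)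
    have h1 := hmin _ hyV
    have h2 : ℓ ((1 - t) • b + t • u) ≤ (1 - t) * ℓ b + t * ℓ u :=
      hℓ.2 (Set.mem_univ b) (Set.mem_univ u) (by linarith) ht0.le (by ring)
    have h3 : (inner ℝ (Dψ a) ((1 - t) • b + t • u - a) : ℝ)
        = (inner ℝ (Dψ a) (b - a) : ℝ) + t * (inner ℝ (Dψ a) v : ℝ) := by
      rw [show (1 - t) • b + t • u - a = (b - a) + t • v by rw [hv]; module,
        inner_add_right, real_inner_smul_right]
    rw [← hy] at h1 h2 h3
    simp only [breg] at h1
    have hchain : η * ℓ b - η * ((1 - t) * ℓ b + t * ℓ u)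
        ≤ ψ (b + t • v) - ψ b - t * (inner ℝ (Dψ a) v : ℝ) := by nlinarith
    have hslope_eval : slope (fun s : ℝ => ψ (b + s • v)) 0 t = (ψ (b + t • v) - ψ b) / t := by
      simp [slope_def_field]
    rw [hslope_eval, le_div_iff₀ ht0]
    nlinarith
  linarith

/-- Master lemma for Implicit OMD: the cumulative post-update losses satisfy
`∑ₜ [ℓ_t(x_{t+1}) − ℓ_t(u)] ≤ ∑ₜ [B(u,x_t) − B(u,x_{t+1})]/η_t − ∑ₜ B(x_{t+1},x_t)/η_t`. -/
theorem iomd_master_lemma {d : ℕ}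
    (V : Set (EuclideanSpace ℝ (Fin d)))
    (hVne : V.Nonempty) (hVcl : IsClosed V) (hVcv : Convex ℝ V)
    (ψ : EuclideanSpace ℝ (Fin d) → ℝ)
    (Dψ : EuclideanSpace ℝ (Fin d) → EuclideanSpace ℝ (Fin d))
    (hψ : StrictConvexOn ℝ Set.univ ψ)
    (hgrad : ∀ x, HasGradientAt ψ (Dψ x) x)
    (T : ℕ)
    (ℓ : ℕ → EuclideanSpace ℝ (Fin d) → ℝ)
    (η : ℕ → ℝ)
    (x : ℕ → EuclideanSpace ℝ (Fin d))
    (hx1 : x 1 ∈ V)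
    (hconv : ∀ t ∈ Icc 1 T, ConvexOn ℝ Set.univ (ℓ t))
    (hη : ∀ t ∈ Icc 1 T, 0 < η t)
    (hmem : ∀ t ∈ Icc 1 T, x (t + 1) ∈ V)
    (hmin : ∀ t ∈ Icc 1 T, ∀ y ∈ V,
      breg ψ Dψ (x (t + 1)) (x t) + η t * ℓ t (x (t + 1)) ≤ breg ψ Dψ y (x t) + η t * ℓ t y) :
    ∀ u ∈ V,
      ∑ t ∈ Icc 1 T, (ℓ t (x (t + 1)) - ℓ t u) ≤
        ∑ t ∈ Icc 1 T, (breg ψ Dψ u (x t) - breg ψ Dψ u (x (t + 1))) / η t -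
          ∑ t ∈ Icc 1 T, breg ψ Dψ (x (t + 1)) (x t) / η t := by
  intro u hu
  rw [← Finset.sum_sub_distrib]
  refine Finset.sum_le_sum fun t ht => ?_
  have hηt := hη t ht
  have key := iomd_step hVcv hgrad (hconv t ht) hηt (hmem t ht) hu (hmin t ht)
  have hid : breg ψ Dψ u (x t) - breg ψ Dψ u (x (t+1)) - breg ψ Dψ (x (t+1)) (x t)
      = (inner ℝ (Dψ (x (t+1))) (u - x (t+1)) : ℝ) - (inner ℝ (Dψ (x t)) (u - x (t+1)) : ℝ) := by
    simp only [breg]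
    rw [show u - x t = (u - x (t+1)) + (x (t+1) - x t) by abel, inner_add_right]
    ring
  rw [← sub_div, le_div_iff₀ hηt]
  nlinarith [key]
end

section
/- For the Implicit OMD iterates, the regret satisfies R_T(u) = ∑_{t=1}^T[ℓ_t(x_t) − ℓ_t(u)] ≤ ∑_{t=1}^T [B_ψ(u, x_t) − B_ψ(u, x_{t+1})]/η_t + ∑_{t=1}^T [ℓ_t(x_t) − ℓ_t(x_{t+1}) − B_ψ(x_{t+1}, x_t)/η_t] for every u ∈ V. -/
open Finset

theorem dir_deriv_lb {d : ℕ} (ψ : EuclideanSpace ℝ (Fin d) → ℝ)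
    (Dψ : EuclideanSpace ℝ (Fin d) → EuclideanSpace ℝ (Fin d))
    (p v : EuclideanSpace ℝ (Fin d))
    (hgrad : HasGradientAt ψ (Dψ p) p)
    (c : ℝ)
    (h : ∀ s : ℝ, s ∈ Set.Ioo (0:ℝ) 1 → c ≤ (ψ (p + s • v) - ψ p) / s) :
    c ≤ (inner ℝ (Dψ p) v : ℝ) := by
  have hline : HasDerivAt (fun s : ℝ => p + s • v) v 0 := by
    simpa using ((hasDerivAt_id (0:ℝ)).smul_const v).const_add p
  have hcomp : HasDerivAt (fun s : ℝ => ψ (p + s • v)) (inner ℝ (Dψ p) v : ℝ) 0 := by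
    have h0 : HasFDerivAt ψ ((InnerProductSpace.toDual ℝ (EuclideanSpace ℝ (Fin d))) (Dψ p)) (p + (0:ℝ) • v) := by
      simpa using hgrad.hasFDerivAt
    exact h0.comp_hasDerivAt 0 hline
  have htend := (hcomp.hasDerivWithinAt (s := Set.Ioi (0:ℝ)))
  rw [hasDerivWithinAt_iff_tendsto_slope] at htend
  have hsub : Set.Ioi (0:ℝ) \ {0} = Set.Ioi 0 := by
    ext s; simp (config := {contextual := true}) [ne_of_gt]
  rw [hsub] at htend
  refine ge_of_tendsto htend ?_
  filter_upwards [Ioo_mem_nhdsGT_of_mem (by norm_num : (0:ℝ) ∈ Set.Ico 0 1)] with s hs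
  have := h s hs
  have hs' : slope (fun s : ℝ => ψ (p + s • v)) 0 s = (ψ (p + s • v) - ψ p) / s := by
    rw [slope_def_field]; simp
  rw [hs']; exact this

theorem step_bound {d : ℕ}
    (V : Set (EuclideanSpace ℝ (Fin d))) (hVcv : Convex ℝ V)
    (ψ : EuclideanSpace ℝ (Fin d) → ℝ)
    (Dψ : EuclideanSpace ℝ (Fin d) → EuclideanSpace ℝ (Fin d))
    (hgrad : ∀ x, HasGradientAt ψ (Dψ x) x)
    (f : EuclideanSpace ℝ (Fin d) → ℝ) (hf : ConvexOn ℝ Set.univ f)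
    (η : ℝ) (hη : 0 < η)
    (xt xn u : EuclideanSpace ℝ (Fin d)) (hxn : xn ∈ V) (hu : u ∈ V)
    (hmin : ∀ y ∈ V, breg ψ Dψ xn xt + η * f xn ≤ breg ψ Dψ y xt + η * f y) :
    f xt - f u ≤ (breg ψ Dψ u xt - breg ψ Dψ u xn) / η + (f xt - f xn - breg ψ Dψ xn xt / η) := by
  set v := u - xn with hv
  have key : η * (f xn - f u) + (inner ℝ (Dψ xt) v : ℝ) ≤ (inner ℝ (Dψ xn) v : ℝ) := by
    apply dir_deriv_lb ψ Dψ xn v (hgrad xn)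
    intro s hs
    obtain ⟨hs0, hs1⟩ := hs
    set y := xn + s • v with hy
    have hyV : y ∈ V := by
      have : y = (1 - s) • xn + s • u := by
        rw [hy, hv]; module
      rw [this]
      exact hVcv hxn hu (by linarith) (le_of_lt hs0) (by ring)
    have h1 := hmin y hyV
    have h2 : f y ≤ (1 - s) * f xn + s * f u := by
      have : y = (1 - s) • xn + s • u := by rw [hy, hv]; module
      rw [this]
      simpa using hf.2 (Set.mem_univ xn) (Set.mem_univ u) (by linarith : (0:ℝ) ≤ 1 - s) (le_of_lt hs0) (by ring)
    have h3 : breg ψ Dψ y xt - breg ψ Dψ xn xt = ψ y - ψ xn - s * (inner ℝ (Dψ xt) v : ℝ) := by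
      simp only [breg, hy]
      have : (inner ℝ (Dψ xt) (xn + s • v - xt) : ℝ) = (inner ℝ (Dψ xt) (xn - xt) : ℝ) + s * (inner ℝ (Dψ xt) v : ℝ) := by
        rw [show xn + s • v - xt = (xn - xt) + s • v by abel, inner_add_right, real_inner_smul_right]
      rw [this]; ring
    have h4 : s * (η * (f xn - f u) + (inner ℝ (Dψ xt) v : ℝ)) ≤ ψ y - ψ xn := by nlinarith
    rw [le_div_iff₀ hs0]
    nlinarith [h4]
  -- three-point identity
  have tp : breg ψ Dψ u xt - breg ψ Dψ u xn - breg ψ Dψ xn xt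
      = (inner ℝ (Dψ xn) v : ℝ) - (inner ℝ (Dψ xt) v : ℝ) := by
    simp only [breg, hv]
    have e1 : (inner ℝ (Dψ xt) (u - xt) : ℝ) = (inner ℝ (Dψ xt) (u - xn) : ℝ) + (inner ℝ (Dψ xt) (xn - xt) : ℝ) := by
      rw [← inner_add_right]; norm_num
    rw [e1]; ring
  have hmain : η * (f xn - f u) ≤ breg ψ Dψ u xt - breg ψ Dψ u xn - breg ψ Dψ xn xt := by
    rw [tp]; linarith
  have h5 : f xn - f u ≤ (breg ψ Dψ u xt - breg ψ Dψ u xn - breg ψ Dψ xn xt) / η := by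
    rw [le_div_iff₀ hη]; linarith [hmain]
  have : (breg ψ Dψ u xt - breg ψ Dψ u xn - breg ψ Dψ xn xt) / η
      = (breg ψ Dψ u xt - breg ψ Dψ u xn) / η - breg ψ Dψ xn xt / η := by ring
  rw [this] at h5
  linarith

/-- Regret bound for Implicit OMD:
`R_T(u) ≤ ∑ₜ [B(u,x_t) − B(u,x_{t+1})]/η_t + ∑ₜ [ℓ_t(x_t) − ℓ_t(x_{t+1}) − B(x_{t+1},x_t)/η_t]`. -/
theorem iomd_regret_bound {d : ℕ}
    (V : Set (EuclideanSpace ℝ (Fin d)))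
    (hVne : V.Nonempty) (hVcl : IsClosed V) (hVcv : Convex ℝ V)
    (ψ : EuclideanSpace ℝ (Fin d) → ℝ)
    (Dψ : EuclideanSpace ℝ (Fin d) → EuclideanSpace ℝ (Fin d))
    (hψ : StrictConvexOn ℝ Set.univ ψ)
    (hgrad : ∀ x, HasGradientAt ψ (Dψ x) x)
    (T : ℕ)
    (ℓ : ℕ → EuclideanSpace ℝ (Fin d) → ℝ)
    (η : ℕ → ℝ)
    (x : ℕ → EuclideanSpace ℝ (Fin d))
    (hx1 : x 1 ∈ V)
    (hconv : ∀ t ∈ Icc 1 T, ConvexOn ℝ Set.univ (ℓ t))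
    (hη : ∀ t ∈ Icc 1 T, 0 < η t)
    (hmem : ∀ t ∈ Icc 1 T, x (t + 1) ∈ V)
    (hmin : ∀ t ∈ Icc 1 T, ∀ y ∈ V,
      breg ψ Dψ (x (t + 1)) (x t) + η t * ℓ t (x (t + 1)) ≤ breg ψ Dψ y (x t) + η t * ℓ t y) :
    ∀ u ∈ V,
      ∑ t ∈ Icc 1 T, (ℓ t (x t) - ℓ t u) ≤
        ∑ t ∈ Icc 1 T, (breg ψ Dψ u (x t) - breg ψ Dψ u (x (t + 1))) / η t +
          ∑ t ∈ Icc 1 T, (ℓ t (x t) - ℓ t (x (t + 1)) - breg ψ Dψ (x (t + 1)) (x t) / η t) := by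
  intro u hu
  rw [← Finset.sum_add_distrib]
  apply Finset.sum_le_sum
  intro t ht
  exact step_bound V hVcv ψ Dψ hgrad (ℓ t) (hconv t ht) (η t) (hη t ht)
    (x t) (x (t+1)) u (hmem t ht) hu (hmin t ht)
end

section
/- Let ψ be 1-strongly convex w.r.t. ‖·‖, V nonempty closed convex, ℓ convex, η > 0, and x⁺ = argmin_{x ∈ V} B_ψ(x, x_t) + η·ℓ(x). Then for any g ∈ ∂ℓ(x_t): ℓ(x_t) − ℓ(x⁺) − B_ψ(x⁺, x_t)/η ≤ η·‖g‖_⋆²/2. -/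
/-- The subdifferential of a function at a point. -/
def subgrad {E : Type*} [NormedAddCommGroup E] [InnerProductSpace ℝ E]
    (f : E → ℝ) (x : E) : Set E :=
  {g | ∀ z, f x + (inner ℝ g (z - x) : ℝ) ≤ f z}

/-- Per-round bound for the implicit update with a `1`-strongly convex regularizer `ψ`
(w.r.t. a norm `n` with dual norm `ns`): for any `g ∈ ∂ℓ(x_t)`,
`ℓ(x_t) − ℓ(x⁺) − B_ψ(x⁺, x_t)/η ≤ η‖g‖⋆²/2`. -/
theorem implicit_per_round_bound {d : ℕ}
    (V : Set (EuclideanSpace ℝ (Fin d)))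
    (hVne : V.Nonempty) (hVcl : IsClosed V) (hVcv : Convex ℝ V)
    (ℓ ψ : EuclideanSpace ℝ (Fin d) → ℝ)
    (Dψ : EuclideanSpace ℝ (Fin d) → EuclideanSpace ℝ (Fin d))
    (n ns : EuclideanSpace ℝ (Fin d) → ℝ)
    -- `n` is a norm:
    (hn0 : ∀ v, 0 ≤ n v)
    (hntri : ∀ v w, n (v + w) ≤ n v + n w)
    (hnhom : ∀ (r : ℝ) v, n (r • v) = |r| * n v)
    -- `ns` is the dual norm of `n` (generalized Cauchy–Schwarz):
    (hdual : ∀ g v, (inner ℝ g v : ℝ) ≤ ns g * n v)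
    (hℓ : ConvexOn ℝ Set.univ ℓ)
    (hgrad : ∀ x, HasGradientAt ψ (Dψ x) x)
    -- `ψ` is 1-strongly convex w.r.t. `n` on `V`:
    (hsc : ∀ a ∈ V, ∀ b ∈ V,
      ψ b + (inner ℝ (Dψ b) (a - b) : ℝ) + 1 / 2 * (n (a - b)) ^ 2 ≤ ψ a)
    (η : ℝ) (hη : 0 < η)
    (xt xplus : EuclideanSpace ℝ (Fin d))
    (hxt : xt ∈ V) (hxplus : xplus ∈ V)
    (hmin : ∀ x ∈ V, breg ψ Dψ xplus xt + η * ℓ xplus ≤ breg ψ Dψ x xt + η * ℓ x) :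
    ∀ g ∈ subgrad ℓ xt,
      ℓ xt - ℓ xplus - breg ψ Dψ xplus xt / η ≤ η * (ns g) ^ 2 / 2 := by
  intro g hg
  have hsub := hg xplus
  have hB : 1 / 2 * (n (xplus - xt)) ^ 2 ≤ breg ψ Dψ xplus xt := by
    have := hsc xplus hxplus xt hxt
    unfold breg; linarith
  have h2 : n (xt - xplus) = n (xplus - xt) := by
    have := hnhom (-1) (xplus - xt)
    simpa [neg_sub] using this
  have hcs : (inner ℝ g (xt - xplus) : ℝ) ≤ ns g * n (xplus - xt) := by
    have h1 := hdual g (xt - xplus)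
    rw [h2] at h1; exact h1
  have hinner : (inner ℝ g (xt - xplus) : ℝ) = -(inner ℝ g (xplus - xt) : ℝ) := by
    rw [← inner_neg_right, neg_sub]
  set a := ns g
  set b := n (xplus - xt)
  have h2η : (0:ℝ) < 2 * η := by linarith
  have key : a * b ≤ η * a ^ 2 / 2 + b ^ 2 / (2 * η) := by
    rw [← sub_nonneg]
    have heq : η * a ^ 2 / 2 + b ^ 2 / (2 * η) - a * b = (η * a - b) ^ 2 / (2 * η) := by
      field_simp; ring
    rw [heq]; positivity
  have hℓxt : ℓ xt - ℓ xplus ≤ a * b := by linarith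
  have hBdiv : 1 / 2 * b ^ 2 / η ≤ breg ψ Dψ xplus xt / η := by gcongr
  have hbb : 1 / 2 * b ^ 2 / η = b ^ 2 / (2 * η) := by ring
  linarith
end

section
/- Consider Implicit OMD with constant learning rate η_t = η for all t. Then for every u ∈ V: R_T(u) ≤ B_ψ(u, x₁)/η + ℓ₁(x₁) − ℓ_T(x_{T+1}) + V_T, where V_T = ∑_{t=2}^T max_{x ∈ V}(ℓ_t(x) − ℓ_{t−1}(x)) is the temporal variability. -/
open Finset Filter Topology

private lemma slope_ge_of_quot {g : ℝ → ℝ} {c r : ℝ} (hg : HasDerivAt g c 0)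
    (h : ∀ l ∈ Set.Ioc (0:ℝ) 1, r ≤ (g l - g 0) / l) : r ≤ c := by
  have ht : Tendsto (slope g 0) (𝓝[>] (0:ℝ)) (𝓝 c) :=
    (hasDerivAt_iff_tendsto_slope.1 hg).mono_left
      (nhdsWithin_mono _ fun y hy => ne_of_gt hy)
  refine ge_of_tendsto ht ?_
  filter_upwards [Ioc_mem_nhdsGT_of_mem (Set.mem_Ico.2 ⟨le_refl (0:ℝ), one_pos⟩)] with l hl
  simpa [slope, sub_zero, div_eq_inv_mul] using h l hl

private lemma slope_le_of_quot {g : ℝ → ℝ} {c r : ℝ} (hg : HasDerivAt g c 0)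
    (h : ∀ l ∈ Set.Ioc (0:ℝ) 1, (g l - g 0) / l ≤ r) : c ≤ r := by
  have ht : Tendsto (slope g 0) (𝓝[>] (0:ℝ)) (𝓝 c) :=
    (hasDerivAt_iff_tendsto_slope.1 hg).mono_left
      (nhdsWithin_mono _ fun y hy => ne_of_gt hy)
  refine le_of_tendsto ht ?_
  filter_upwards [Ioc_mem_nhdsGT_of_mem (Set.mem_Ico.2 ⟨le_refl (0:ℝ), one_pos⟩)] with l hl
  simpa [slope, sub_zero, div_eq_inv_mul] using h l hl

private lemma hasDerivAt_comp_line {E : Type*} [NormedAddCommGroup E] [InnerProductSpace ℝ E]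
    [CompleteSpace E] {ψ : E → ℝ} {Dψ : E → E} (hgrad : ∀ x, HasGradientAt ψ (Dψ x) x)
    (z v : E) : HasDerivAt (fun l : ℝ => ψ (z + l • v)) (inner ℝ (Dψ z) v : ℝ) 0 := by
  have h1 : HasDerivAt (fun l : ℝ => z + l • v) v 0 := by
    simpa using ((hasDerivAt_id (0:ℝ)).smul_const v).const_add z
  have h3 : HasFDerivAt ψ (InnerProductSpace.toDual ℝ E (Dψ z)) ((fun l : ℝ => z + l • v) 0) := by
    simpa using (hgrad z).hasFDerivAt
  have h4 := h3.comp_hasDerivAt 0 h1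
  simp only [InnerProductSpace.toDual_apply_apply] at h4
  exact h4

private lemma breg_nonneg' {E : Type*} [NormedAddCommGroup E] [InnerProductSpace ℝ E]
    [CompleteSpace E] {ψ : E → ℝ} {Dψ : E → E} (hψ : ConvexOn ℝ Set.univ ψ)
    (hgrad : ∀ x, HasGradientAt ψ (Dψ x) x) (a b : E) : 0 ≤ breg ψ Dψ a b := by
  have hd := hasDerivAt_comp_line hgrad b (a - b)
  have key : (inner ℝ (Dψ b) (a - b) : ℝ) ≤ ψ a - ψ b := by
    refine slope_le_of_quot hd fun l hl => ?_
    have hcomb : (1 - l) • b + l • a = b + l • (a - b) := by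
      rw [sub_smul, smul_sub, one_smul]; abel
    have h1 : ψ (b + l • (a - b)) ≤ (1 - l) * ψ b + l * ψ a := by
      have := hψ.2 (Set.mem_univ b) (Set.mem_univ a)
        (by linarith [hl.2] : (0:ℝ) ≤ 1 - l) hl.1.le (by ring)
      rw [hcomb] at this
      simpa [smul_eq_mul] using this
    rw [div_le_iff₀ hl.1]; simp only [zero_smul, add_zero]
    nlinarith
  simp only [breg]; linarith

private lemma key_ineq {E : Type*} [NormedAddCommGroup E] [InnerProductSpace ℝ E]
    [CompleteSpace E] {V : Set E} (hVcv : Convex ℝ V) {ψ : E → ℝ} {Dψ : E → E}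
    (hgrad : ∀ x, HasGradientAt ψ (Dψ x) x) {ℓ : E → ℝ} (hℓ : ConvexOn ℝ Set.univ ℓ)
    {η : ℝ} (hη : 0 < η) (p : E) {z : E} (hz : z ∈ V)
    (hmin : ∀ y ∈ V, breg ψ Dψ z p + η * ℓ z ≤ breg ψ Dψ y p + η * ℓ y)
    {u : E} (hu : u ∈ V) :
    η * (ℓ z - ℓ u) ≤ breg ψ Dψ u p - breg ψ Dψ u z - breg ψ Dψ z p := by
  have hd := hasDerivAt_comp_line hgrad z (u - z)
  have key : η * (ℓ z - ℓ u) + (inner ℝ (Dψ p) (u - z) : ℝ) ≤ (inner ℝ (Dψ z) (u - z) : ℝ) := by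
    refine slope_ge_of_quot hd fun l hl => ?_
    have hcomb : (1 - l) • z + l • u = z + l • (u - z) := by
      rw [sub_smul, smul_sub, one_smul]; abel
    have hmemV : z + l • (u - z) ∈ V := by
      rw [← hcomb]
      exact hVcv hz hu (by linarith [hl.2]) hl.1.le (by ring)
    have h1 : ℓ (z + l • (u - z)) ≤ (1 - l) * ℓ z + l * ℓ u := by
      have := hℓ.2 (Set.mem_univ z) (Set.mem_univ u)
        (by linarith [hl.2] : (0:ℝ) ≤ 1 - l) hl.1.le (by ring)
      rw [hcomb] at this
      simpa [smul_eq_mul] using this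
    have h2 := hmin _ hmemV
    have h3 : (inner ℝ (Dψ p) (z + l • (u - z) - p) : ℝ)
        = (inner ℝ (Dψ p) (z - p) : ℝ) + l * (inner ℝ (Dψ p) (u - z) : ℝ) := by
      have : z + l • (u - z) - p = (z - p) + l • (u - z) := by abel
      rw [this, inner_add_right, real_inner_smul_right]
    simp only [breg] at h2
    rw [h3] at h2
    rw [le_div_iff₀ hl.1]; simp only [zero_smul, add_zero]
    nlinarith
  have h4 : (inner ℝ (Dψ p) (u - p) : ℝ) - (inner ℝ (Dψ p) (z - p) : ℝ)
      = (inner ℝ (Dψ p) (u - z) : ℝ) := by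
    rw [← inner_sub_right]; congr 1; abel
  simp only [breg]; linarith

/-- Implicit OMD with constant learning rate `η`:
`R_T(u) ≤ B_ψ(u, x₁)/η + ℓ₁(x₁) − ℓ_T(x_{T+1}) + V_T`, where
`V_T = ∑_{t=2}^T max_{x ∈ V}(ℓ_t(x) − ℓ_{t−1}(x))`. -/
theorem iomd_constant_rate_temporal_variability {d : ℕ}
    (V : Set (EuclideanSpace ℝ (Fin d)))
    (hVne : V.Nonempty) (hVcl : IsClosed V) (hVcv : Convex ℝ V)
    (ψ : EuclideanSpace ℝ (Fin d) → ℝ)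
    (Dψ : EuclideanSpace ℝ (Fin d) → EuclideanSpace ℝ (Fin d))
    (hψ : StrictConvexOn ℝ Set.univ ψ)
    (hgrad : ∀ x, HasGradientAt ψ (Dψ x) x)
    (T : ℕ) (hT : 1 ≤ T)
    (ℓ : ℕ → EuclideanSpace ℝ (Fin d) → ℝ)
    (η : ℝ) (hη : 0 < η)
    (x : ℕ → EuclideanSpace ℝ (Fin d))
    (hx1 : x 1 ∈ V)
    (hconv : ∀ t ∈ Icc 1 T, ConvexOn ℝ Set.univ (ℓ t))
    (hmem : ∀ t ∈ Icc 1 T, x (t + 1) ∈ V)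
    (hmin : ∀ t ∈ Icc 1 T, ∀ y ∈ V,
      breg ψ Dψ (x (t + 1)) (x t) + η * ℓ t (x (t + 1)) ≤ breg ψ Dψ y (x t) + η * ℓ t y)
    -- `M t` is the attained maximum of `ℓ_t − ℓ_{t−1}` over `V`:
    (M : ℕ → ℝ)
    (hM : ∀ t ∈ Icc 2 T, IsGreatest ((fun y => ℓ t y - ℓ (t - 1) y) '' V) (M t)) :
    ∀ u ∈ V,
      ∑ t ∈ Icc 1 T, (ℓ t (x t) - ℓ t u) ≤
        breg ψ Dψ u (x 1) / η + ℓ 1 (x 1) - ℓ T (x (T + 1)) + ∑ t ∈ Icc 2 T, M t := by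

  intro u hu
  have hψc : ConvexOn ℝ Set.univ ψ := hψ.convexOn
  have hB : ∀ a b, 0 ≤ breg ψ Dψ a b := breg_nonneg' hψc hgrad
  have step : ∀ t ∈ Icc 1 T,
      η * (ℓ t (x (t + 1)) - ℓ t u) ≤ breg ψ Dψ u (x t) - breg ψ Dψ u (x (t + 1)) := by
    intro t ht
    have h := key_ineq hVcv hgrad (hconv t ht) hη (x t) (hmem t ht)
      (fun y hy => hmin t ht y hy) hu
    linarith [hB (x (t + 1)) (x t)]
  have hxV : ∀ t ∈ Icc 2 T, x t ∈ V := by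
    intro t ht
    simp only [mem_Icc] at ht
    have h1 : t - 1 ∈ Icc 1 T := by simp only [mem_Icc]; omega
    have h2 := hmem (t - 1) h1
    have : t - 1 + 1 = t := by omega
    rwa [this] at h2
  have hMle : ∀ t ∈ Icc 2 T, ℓ t (x t) - ℓ (t - 1) (x t) ≤ M t := fun t ht =>
    (hM t ht).2 ⟨x t, hxV t ht, rfl⟩
  have main : ∀ k, 1 ≤ k → k ≤ T →
      ∑ t ∈ Icc 1 k, (ℓ t (x t) - ℓ t u) ≤
        (breg ψ Dψ u (x 1) - breg ψ Dψ u (x (k + 1))) / η + ℓ 1 (x 1)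
          - ℓ k (x (k + 1)) + ∑ t ∈ Icc 2 k, M t := by
    intro k hk
    induction k, hk using Nat.le_induction with
    | base =>
      intro h1T
      have hs := step 1 (by simp [h1T])
      have h1 : ℓ 1 (x (1 + 1)) - ℓ 1 u ≤
          (breg ψ Dψ u (x 1) - breg ψ Dψ u (x (1 + 1))) / η := by
        rw [le_div_iff₀ hη]; nlinarith [hs]
      simp only [Icc_self, sum_singleton, show Icc 2 1 = (∅ : Finset ℕ) by decide,
        sum_empty]
      linarith
    | succ k hk1 ih =>
      intro hkT
      have hkT' : k ≤ T := by omega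
      have ih' := ih hkT'
      have hs := step (k + 1) (by simp only [mem_Icc]; omega)
      have hMk : ℓ (k + 1) (x (k + 1)) - ℓ k (x (k + 1)) ≤ M (k + 1) := by
        have := hMle (k + 1) (by simp only [mem_Icc]; omega)
        simpa using this
      rw [sum_Icc_succ_top (by omega : 1 ≤ k + 1), sum_Icc_succ_top (by omega : 2 ≤ k + 1)]
      have hdiv : ℓ (k + 1) (x (k + 1 + 1)) - ℓ (k + 1) u ≤
          (breg ψ Dψ u (x (k + 1)) - breg ψ Dψ u (x (k + 1 + 1))) / η := by
        rw [le_div_iff₀ hη]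
        nlinarith [hs]
      have e1 : (breg ψ Dψ u (x 1) - breg ψ Dψ u (x (k + 1))) / η
          + (breg ψ Dψ u (x (k + 1)) - breg ψ Dψ u (x (k + 1 + 1))) / η
          = (breg ψ Dψ u (x 1) - breg ψ Dψ u (x (k + 1 + 1))) / η := by
        rw [← add_div]; ring_nf
      linarith [ih', hdiv, hMk]
  have hfin := main T hT le_rfl
  have hlast := hB u (x (T + 1))
  have hdd : (breg ψ Dψ u (x 1) - breg ψ Dψ u (x (T + 1))) / η ≤ breg ψ Dψ u (x 1) / η := by
    gcongr
    linarith
  linarith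
end

section
/- Let {a_t} be a sequence of non-negative reals and {Δ_t} a sequence of non-negative reals with Δ₁ = 0 and Δ_{t+1} ≤ Δ_t + min{b·a_t, c·a_t²/(2Δ_t)} for all t ≥ 1 (interpreting min{x, y/0} = x), where b, c ≥ 0. Then for all T ≥ 0: Δ_{T+1} ≤ √((b² + c)·∑_{t=1}^T a_t²). -/
open Finset

/-- AdaFTRL/AdaHedge-style recurrence lemma: if `Δ₁ = 0` and
`Δ_{t+1} ≤ Δ_t + min{b a_t, c a_t²/(2Δ_t)}` (interpreting `min{x, y/0} = x`),
then `Δ_{T+1} ≤ √((b² + c) ∑_{t=1}^T a_t²)`. -/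
theorem adahedge_recurrence (a Δ : ℕ → ℝ) (b c : ℝ)
    (hb : 0 ≤ b) (hc : 0 ≤ c)
    (ha : ∀ t, 0 ≤ a t)
    (hΔ0 : ∀ t, 0 ≤ Δ t)
    (hΔ1 : Δ 1 = 0)
    (hrec : ∀ t, 1 ≤ t →
      Δ (t + 1) ≤ Δ t +
        (if Δ t = 0 then b * a t else min (b * a t) (c * (a t) ^ 2 / (2 * Δ t)))) :
    ∀ T : ℕ, Δ (T + 1) ≤ Real.sqrt ((b ^ 2 + c) * ∑ t ∈ Icc 1 T, (a t) ^ 2) := by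
  have key : ∀ T : ℕ, (Δ (T + 1)) ^ 2 ≤ (b ^ 2 + c) * ∑ t ∈ Icc 1 T, (a t) ^ 2 := by
    intro T
    induction T with
    | zero => simp [hΔ1]
    | succ n ih =>
      set δ : ℝ := (if Δ (n+1) = 0 then b * a (n+1)
          else min (b * a (n+1)) (c * (a (n+1)) ^ 2 / (2 * Δ (n+1)))) with hδ
      have hδ0 : 0 ≤ δ := by
        rw [hδ]
        split
        · exact mul_nonneg hb (ha _)
        · refine le_min (mul_nonneg hb (ha _)) ?_
          apply div_nonneg (mul_nonneg hc (sq_nonneg _))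
          have := hΔ0 (n+1)
          linarith
      have hδb : δ ≤ b * a (n+1) := by
        rw [hδ]; split_ifs with h
        · exact le_rfl
        · exact min_le_left _ _
      have h2 : 2 * δ * Δ (n+1) ≤ c * (a (n+1)) ^ 2 := by
        rw [hδ]
        split_ifs with h
        · rw [h, mul_zero]; positivity
        · have hΔpos : 0 < Δ (n+1) := lt_of_le_of_ne (hΔ0 _) (Ne.symm h)
          have := min_le_right (b * a (n+1)) (c * (a (n+1)) ^ 2 / (2 * Δ (n+1)))
          calc 2 * min (b * a (n+1)) (c * (a (n+1)) ^ 2 / (2 * Δ (n+1))) * Δ (n+1)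
              ≤ 2 * (c * (a (n+1)) ^ 2 / (2 * Δ (n+1))) * Δ (n+1) := by
                have h2Δ : (0:ℝ) ≤ 2 * Δ (n+1) := by linarith
                nlinarith
            _ = c * (a (n+1)) ^ 2 := by field_simp
      have hrec' : Δ (n + 2) ≤ Δ (n+1) + δ := hrec (n+1) (Nat.le_add_left 1 n)
      have hsq : (Δ (n+2)) ^ 2 ≤ (Δ (n+1) + δ) ^ 2 := by
        have h0 := hΔ0 (n+2)
        nlinarith
      have hδsq : δ ^ 2 ≤ b ^ 2 * (a (n+1)) ^ 2 := by
        nlinarith [mul_nonneg hb (ha (n+1))]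
      have hsum : ∑ t ∈ Icc 1 (n+1), (a t) ^ 2
          = (∑ t ∈ Icc 1 n, (a t) ^ 2) + (a (n+1)) ^ 2 := by
        rw [← Finset.sum_Icc_succ_top (by omega : 1 ≤ n+1)]
      rw [hsum]
      have expand : (Δ (n+1) + δ) ^ 2 = (Δ (n+1))^2 + 2 * δ * Δ (n+1) + δ^2 := by ring
      calc (Δ (n+2)) ^ 2 ≤ (Δ (n+1))^2 + 2 * δ * Δ (n+1) + δ^2 := by
            rw [← expand]; exact hsq
        _ ≤ (b ^ 2 + c) * ∑ t ∈ Icc 1 n, (a t) ^ 2 + c * (a (n+1))^2 + b^2 * (a (n+1))^2 := by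
            gcongr <;> try assumption
        _ = (b ^ 2 + c) * ((∑ t ∈ Icc 1 n, (a t) ^ 2) + (a (n+1)) ^ 2) := by ring
  intro T
  rw [Real.le_sqrt (hΔ0 _)]
  · exact key T
  · exact mul_nonneg (add_nonneg (sq_nonneg b) hc)
      (Finset.sum_nonneg fun i _ => sq_nonneg _)
end

section
/- Assume the losses are L-Lipschitz and ψ is 1-strongly convex w.r.t. ‖·‖. Then the doubling-trick IOMD algorithm with threshold sequence L²2^i and step sizes η_i = β/(L√(2^i)) has regret R_T(u) ≤ c·(B_ψ(u, x₁)/β + β)·L·√(T+1) + c·βL/2 for every u ∈ ℝ^d, where c = √2/(√2 − 1). -/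
open Finset Filter

lemma slope_lim {E : Type*} [NormedAddCommGroup E] [InnerProductSpace ℝ E] [CompleteSpace E]
    (ψ : E → ℝ) (g p v : E) (hg : HasGradientAt ψ g p) (c : ℝ)
    (hc : ∀ lam : ℝ, lam ∈ Set.Ioo (0:ℝ) 1 → c * lam ≤ ψ (p + lam • v) - ψ p) :
    c ≤ (inner ℝ g v : ℝ) := by
  have hf : HasDerivAt (fun lam : ℝ => ψ (p + lam • v)) (inner ℝ g v : ℝ) 0 := by
    have h1 : HasDerivAt (fun lam : ℝ => p + lam • v) v 0 := by
      simpa using ((hasDerivAt_id (0:ℝ)).smul_const v).const_add p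
    have hp : p + (0:ℝ) • v = p := by simp
    have h2 := (hp ▸ hg.hasFDerivAt : HasFDerivAt ψ _ (p + (0:ℝ) • v)).comp_hasDerivAt 0 h1
    have h3 : HasDerivAt (ψ ∘ fun lam : ℝ => p + lam • v) (inner ℝ g v) 0 := by
      simpa only [InnerProductSpace.toDual_apply_apply] using h2
    exact h3
  have hs : Tendsto (slope (fun lam : ℝ => ψ (p + lam • v)) 0) (nhdsWithin 0 (Set.Ioi 0))
      (nhds (inner ℝ g v : ℝ)) := by
    have := (hasDerivWithinAt_iff_tendsto_slope.mp (hf.hasDerivWithinAt (s := Set.Ioi 0)))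
    refine this.mono_left (nhdsWithin_mono _ ?_)
    intro y hy; exact ⟨hy, ne_of_gt hy⟩
  refine ge_of_tendsto hs ?_
  filter_upwards [Ioo_mem_nhdsGT_of_mem (Set.mem_Ico.mpr ⟨le_refl (0:ℝ), one_pos⟩)] with lam hlam
  have h := hc lam hlam
  have hlam0 : (0:ℝ) < lam := hlam.1
  rw [slope_def_field]
  simp only [sub_zero, zero_smul, add_zero]
  rw [le_div_iff₀ hlam0]
  linarith

lemma prox_ineq {E : Type*} [NormedAddCommGroup E] [InnerProductSpace ℝ E] [CompleteSpace E]
    (ψ : E → ℝ) (Dψ : E → E) (hgrad : ∀ x, HasGradientAt ψ (Dψ x) x)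
    (f : E → ℝ) (hf : ConvexOn ℝ Set.univ f) (η : ℝ) (hη : 0 < η) (xc p : E)
    (hmin : ∀ y, breg ψ Dψ p xc + η * f p ≤ breg ψ Dψ y xc + η * f y) (u : E) :
    breg ψ Dψ u p ≤ breg ψ Dψ u xc + η * f u - breg ψ Dψ p xc - η * f p := by
  set v := u - p with hv
  have key : (inner ℝ (Dψ xc) v : ℝ) - η * (f u - f p) ≤ (inner ℝ (Dψ p) v : ℝ) := by
    apply slope_lim ψ (Dψ p) p v (hgrad p)
    intro lam hlam
    have h1 := hmin (p + lam • v)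
    have hpt : (1 - lam) • p + lam • u = p + lam • v := by
      rw [hv]; module
    have hcvx := hf.2 (Set.mem_univ p) (Set.mem_univ u)
      (by linarith [hlam.2] : (0:ℝ) ≤ 1 - lam) (le_of_lt hlam.1) (by ring)
    rw [hpt] at hcvx
    have hbr : breg ψ Dψ (p + lam • v) xc - breg ψ Dψ p xc
        = ψ (p + lam • v) - ψ p - lam * (inner ℝ (Dψ xc) v : ℝ) := by
      unfold breg
      have : (inner ℝ (Dψ xc) (p + lam • v - xc) : ℝ)
          = inner ℝ (Dψ xc) (p - xc) + lam * inner ℝ (Dψ xc) v := by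
        rw [show p + lam • v - xc = (p - xc) + lam • v by abel, inner_add_right,
          real_inner_smul_right]
      rw [this]; ring
    simp only [smul_eq_mul] at hcvx
    have hc2 : η * f (p + lam • v) ≤ η * ((1 - lam) * f p + lam * f u) :=
      mul_le_mul_of_nonneg_left hcvx hη.le
    nlinarith [h1, hbr, hc2]
  unfold breg
  have hsplit : (inner ℝ (Dψ xc) (u - xc) : ℝ) - inner ℝ (Dψ xc) (p - xc) = inner ℝ (Dψ xc) v := by
    rw [hv, ← inner_sub_right]; congr 1; abel
  have hup : (inner ℝ (Dψ p) (u - p) : ℝ) = inner ℝ (Dψ p) v := by rw [hv]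
  have hk2 : η * (f u - f p) = η * f u - η * f p := by ring
  linarith [key, hsplit, hup, hk2]

set_option maxHeartbeats 2000000 in
/-- Regret of IOMD with the doubling trick: with `L`-Lipschitz convex losses and a
`1`-strongly convex regularizer, step sizes `η_i = β/(L√(2ⁱ))` and epoch thresholds
`η_i L² 2ⁱ`, the regret is at most `c(B_ψ(u,x₁)/β + β)L√(T+1) + cβL/2`, `c = √2/(√2−1)`. -/
theorem doubling_trick_iomd_regret {d : ℕ}
    (ψ : EuclideanSpace ℝ (Fin d) → ℝ)
    (Dψ : EuclideanSpace ℝ (Fin d) → EuclideanSpace ℝ (Fin d))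
    (n ns : EuclideanSpace ℝ (Fin d) → ℝ)
    -- `n` is a norm with dual norm `ns`:
    (hn0 : ∀ v, 0 ≤ n v)
    (hntri : ∀ v w, n (v + w) ≤ n v + n w)
    (hnhom : ∀ (r : ℝ) v, n (r • v) = |r| * n v)
    (hdual : ∀ g v, (inner ℝ g v : ℝ) ≤ ns g * n v)
    (hgrad : ∀ x, HasGradientAt ψ (Dψ x) x)
    -- `ψ` is 1-strongly convex w.r.t. `n`:
    (hsc : ∀ a b, ψ b + (inner ℝ (Dψ b) (a - b) : ℝ) + 1 / 2 * (n (a - b)) ^ 2 ≤ ψ a)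
    (T : ℕ) (hT : 1 ≤ T)
    (L β : ℝ) (hL : 0 < L) (hβ : 0 < β)
    (ℓ : ℕ → EuclideanSpace ℝ (Fin d) → ℝ)
    (hconv : ∀ t ∈ Icc 1 T, ConvexOn ℝ Set.univ (ℓ t))
    -- the losses are `L`-Lipschitz w.r.t. `n`:
    (hlip : ∀ t ∈ Icc 1 T, ∀ a b, |ℓ t a - ℓ t b| ≤ L * n (a - b))
    -- step size of epoch `i`:
    (η : ℕ → ℝ) (hη : ∀ i, η i = β / (L * Real.sqrt (2 ^ i)))
    -- state of the algorithm: iterates `x`, proposed updates `x'`, epoch index `ep`,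
    -- monitored sum `S`, per-round gains `δ`:
    (x x' : ℕ → EuclideanSpace ℝ (Fin d))
    (ep : ℕ → ℕ) (S δ : ℕ → ℝ)
    (hep1 : ep 1 = 0) (hS0 : S 0 = 0)
    (hupdate : ∀ t ∈ Icc 1 T, ∀ y,
      breg ψ Dψ (x' (t + 1)) (x t) + η (ep t) * ℓ t (x' (t + 1)) ≤
        breg ψ Dψ y (x t) + η (ep t) * ℓ t y)
    (hδ : ∀ t ∈ Icc 1 T,
      δ t = ℓ t (x t) - ℓ t (x' (t + 1)) - breg ψ Dψ (x' (t + 1)) (x t) / η (ep t))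
    -- restart rule: double when the monitored sum reaches the threshold `η_i L² 2ⁱ`:
    (hstep : ∀ t ∈ Icc 1 T,
      if η (ep t) * L ^ 2 * 2 ^ ep t ≤ S (t - 1) + δ t then
        ep (t + 1) = ep t + 1 ∧ S t = 0 ∧ x (t + 1) = x 1
      else
        ep (t + 1) = ep t ∧ S t = S (t - 1) + δ t ∧ x (t + 1) = x' (t + 1)) :
    ∀ u, ∑ t ∈ Icc 1 T, (ℓ t (x t) - ℓ t u) ≤
      Real.sqrt 2 / (Real.sqrt 2 - 1) * (breg ψ Dψ u (x 1) / β + β) * L *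
          Real.sqrt (T + 1) +
        Real.sqrt 2 / (Real.sqrt 2 - 1) * (β * L) / 2 := by
  intro u
  -- basic positivity facts
  have hs0 : (0:ℝ) < Real.sqrt 2 := Real.sqrt_pos.mpr (by norm_num)
  have hs1 : (1:ℝ) < Real.sqrt 2 := by
    rw [show (1:ℝ) = Real.sqrt 1 by simp]
    exact Real.sqrt_lt_sqrt (by norm_num) (by norm_num)
  have hss : Real.sqrt 2 * Real.sqrt 2 = 2 := Real.mul_self_sqrt (by norm_num)
  have hηpos : ∀ i, 0 < η i := by
    intro i
    rw [hη i]
    have : (0:ℝ) < Real.sqrt (2 ^ i) := Real.sqrt_pos.mpr (by positivity)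
    positivity
  have hbregnn : ∀ a b, 0 ≤ breg ψ Dψ a b := by
    intro a b
    have h := hsc a b
    have := sq_nonneg (n (a - b))
    unfold breg
    linarith
  have hbregsc : ∀ a b, 1 / 2 * (n (a - b)) ^ 2 ≤ breg ψ Dψ a b := by
    intro a b
    have h := hsc a b
    unfold breg
    linarith
  have hbregself : ∀ a, breg ψ Dψ a a = 0 := by
    intro a; unfold breg; simp
  -- per-round facts
  have hδnn : ∀ t ∈ Icc 1 T, 0 ≤ δ t := by
    intro t ht
    have h := hupdate t ht (x t)
    rw [hbregself (x t)] at h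
    have hpos := hηpos (ep t)
    have hle : breg ψ Dψ (x' (t + 1)) (x t) / η (ep t)
        ≤ ℓ t (x t) - ℓ t (x' (t + 1)) := by
      rw [div_le_iff₀ hpos]
      nlinarith [h]
    rw [hδ t ht]
    linarith
  have hδle : ∀ t ∈ Icc 1 T, δ t ≤ η (ep t) * L ^ 2 / 2 := by
    intro t ht
    have hpos := hηpos (ep t)
    set p := x' (t + 1)
    set r := n (p - x t) with hr
    have hr0 : 0 ≤ r := hn0 _
    have hlipt : ℓ t (x t) - ℓ t p ≤ L * r := by
      have h := hlip t ht (x t) p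
      have hsym : n (x t - p) = r := by
        rw [hr, show x t - p = (-1 : ℝ) • (p - x t) by module, hnhom]
        norm_num
      rw [hsym] at h
      exact (abs_le.mp h).2
    have hBr : 1 / 2 * r ^ 2 ≤ breg ψ Dψ p (x t) := hbregsc p (x t)
    have hηδ : η (ep t) * δ t
        = η (ep t) * (ℓ t (x t) - ℓ t p) - breg ψ Dψ p (x t) := by
      rw [hδ t ht]
      field_simp
      ring
    have hub : η (ep t) * δ t ≤ η (ep t) * (η (ep t) * L ^ 2 / 2) := by
      rw [hηδ]
      nlinarith [sq_nonneg (r - η (ep t) * L), mul_le_mul_of_nonneg_left hlipt hpos.le]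
    exact le_of_mul_le_mul_left hub hpos
  have hround : ∀ t ∈ Icc 1 T, ℓ t (x t) - ℓ t u ≤
      δ t + (breg ψ Dψ u (x t) - breg ψ Dψ u (x' (t + 1))) / η (ep t) := by
    intro t ht
    have hpos := hηpos (ep t)
    have hp := prox_ineq ψ Dψ hgrad (ℓ t) (hconv t ht) (η (ep t)) hpos (x t) (x' (t + 1))
      (fun y => hupdate t ht y) u
    have hηδ : η (ep t) * δ t
        = η (ep t) * (ℓ t (x t) - ℓ t (x' (t + 1))) - breg ψ Dψ (x' (t + 1)) (x t) := by
      rw [hδ t ht]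
      field_simp
    rw [show δ t + (breg ψ Dψ u (x t) - breg ψ Dψ u (x' (t + 1))) / η (ep t)
        = (η (ep t) * δ t + (breg ψ Dψ u (x t) - breg ψ Dψ u (x' (t + 1)))) / η (ep t) by
      field_simp]
    rw [le_div_iff₀ hpos]
    nlinarith [hp, hηδ]
  -- the invariant
  set B : ℝ := breg ψ Dψ u (x 1) with hB
  have hBnn : 0 ≤ B := hbregnn u (x 1)
  have main : ∀ t, t ≤ T →
      0 ≤ S t ∧
      S t ≤ η (ep (t + 1)) * L ^ 2 * 2 ^ ep (t + 1) ∧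
      L ^ 2 * ((2:ℝ) ^ ep (t + 1) - 1) + S t / η (ep (t + 1)) ≤ L ^ 2 * t / 2 ∧
      (∑ s ∈ Icc 1 t, (ℓ s (x s) - ℓ s u)) ≤
        (∑ i ∈ range (ep (t + 1)), (B / η i + η i * L ^ 2 * 2 ^ i + η i * L ^ 2 / 2)) +
          S t + (B - breg ψ Dψ u (x (t + 1))) / η (ep (t + 1)) := by
    intro t
    induction t with
    | zero =>
      intro _
      rw [hS0, hep1]
      refine ⟨le_refl 0, le_of_lt (mul_pos (mul_pos (hηpos _) (pow_pos hL 2)) (pow_pos two_pos _)), by simp, ?_⟩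
      simp [hB]
    | succ t ih =>
      intro ht1
      obtain ⟨ihS0, ihSle, ihM, ihR⟩ := ih (Nat.le_of_succ_le ht1)
      have hr : t + 1 ∈ Icc 1 T := mem_Icc.mpr ⟨Nat.succ_le_succ (Nat.zero_le t), ht1⟩
      have h := hstep (t + 1) hr
      simp only [Nat.add_sub_cancel] at h
      have hpos := hηpos (ep (t + 1))
      have hδn := hδnn (t + 1) hr
      have hδl := hδle (t + 1) hr
      have hδlq : δ (t + 1) / η (ep (t + 1)) ≤ L ^ 2 / 2 := by
        rw [div_le_iff₀ hpos]
        nlinarith [hδl]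
      have hrd := hround (t + 1) hr
      have hRsum : (∑ s ∈ Icc 1 (t + 1), (ℓ s (x s) - ℓ s u))
          = (∑ s ∈ Icc 1 t, (ℓ s (x s) - ℓ s u)) + (ℓ (t + 1) (x (t + 1)) - ℓ (t + 1) u) :=
        Finset.sum_Icc_succ_top (Nat.succ_le_succ (Nat.zero_le t)) _
      by_cases hcond : η (ep (t + 1)) * L ^ 2 * 2 ^ ep (t + 1) ≤ S t + δ (t + 1)
      · rw [if_pos hcond] at h
        obtain ⟨hep, hSnew, hxnew⟩ := h
        have hcondq : L ^ 2 * (2:ℝ) ^ ep (t + 1)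
            ≤ S t / η (ep (t + 1)) + δ (t + 1) / η (ep (t + 1)) := by
          rw [← add_div, le_div_iff₀ hpos]
          nlinarith [hcond]
        refine ⟨?_, ?_, ?_, ?_⟩
        · rw [hSnew]
        · rw [hSnew]
          exact le_of_lt (mul_pos (mul_pos (hηpos _) (pow_pos hL 2)) (pow_pos two_pos _))
        · rw [hSnew, hep, pow_succ (2:ℝ) (ep (t+1))]
          push_cast
          have hz : (0:ℝ) / η (ep (t + 1) + 1) = 0 := zero_div _
          rw [hz]
          linarith [ihM, hcondq, hδlq]
        · rw [hSnew, hep, hxnew, hRsum, Finset.sum_range_succ]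
          have hcomb : (B - breg ψ Dψ u (x (t + 1))) / η (ep (t + 1))
              + (breg ψ Dψ u (x (t + 1)) - breg ψ Dψ u (x' (t + 1 + 1))) / η (ep (t + 1))
              = (B - breg ψ Dψ u (x' (t + 1 + 1))) / η (ep (t + 1)) := by
            rw [← add_div]
            congr 1
            ring
          have hdrop : (B - breg ψ Dψ u (x' (t + 1 + 1))) / η (ep (t + 1))
              ≤ B / η (ep (t + 1)) := by
            gcongr
            linarith [hbregnn u (x' (t + 1 + 1))]
          rw [← hB]
          simp only [sub_self, zero_div, add_zero]
          linarith [ihR, hrd, hcomb, hdrop, ihSle, hδl]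
      · rw [if_neg hcond] at h
        obtain ⟨hep, hSnew, hxnew⟩ := h
        push_neg at hcond
        refine ⟨?_, ?_, ?_, ?_⟩
        · rw [hSnew]; linarith
        · rw [hSnew, hep]; linarith
        · rw [hSnew, hep, add_div]
          push_cast
          linarith [ihM, hδlq]
        · rw [hSnew, hep, hRsum]
          rw [← hxnew] at hrd
          have hcomb : (B - breg ψ Dψ u (x (t + 1))) / η (ep (t + 1))
              + (breg ψ Dψ u (x (t + 1)) - breg ψ Dψ u (x (t + 1 + 1))) / η (ep (t + 1))
              = (B - breg ψ Dψ u (x (t + 1 + 1))) / η (ep (t + 1)) := by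
            rw [← add_div]
            congr 1
            ring
          linarith [ihR, hrd, hcomb]
  -- final assembly
  obtain ⟨hS0f, hSlef, hMf, hRf⟩ := main T le_rfl
  set j := ep (T + 1) with hj
  have hposj := hηpos j
  have h2j : (2:ℝ) ^ j ≤ (T:ℝ) + 1 := by
    have hSd : 0 ≤ S T / η j := div_nonneg hS0f hposj.le
    have h1 : L ^ 2 * ((2:ℝ) ^ j - 1) ≤ L ^ 2 * ((T:ℝ) / 2) := by
      have : L ^ 2 * (T:ℝ) / 2 = L ^ 2 * ((T:ℝ) / 2) := by ring
      linarith [hMf]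
    have h2 : (2:ℝ) ^ j - 1 ≤ (T:ℝ) / 2 := le_of_mul_le_mul_left h1 (pow_pos hL 2)
    have hTnn : (0:ℝ) ≤ (T:ℝ) := Nat.cast_nonneg T
    linarith
  have hRT : (∑ s ∈ Icc 1 T, (ℓ s (x s) - ℓ s u)) ≤
      ∑ i ∈ range (j + 1), (B / η i + η i * L ^ 2 * 2 ^ i + η i * L ^ 2 / 2) := by
    rw [Finset.sum_range_succ]
    have hdrop : (B - breg ψ Dψ u (x (T + 1))) / η j ≤ B / η j := by
      gcongr
      linarith [hbregnn u (x (T + 1))]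
    have hη2 : 0 ≤ η j * L ^ 2 / 2 :=
      div_nonneg (mul_nonneg hposj.le (sq_nonneg L)) (by norm_num)
    linarith [hRf, hSlef, hdrop, hη2]
  set s2 := Real.sqrt 2 with hs2
  have h2i : ∀ i : ℕ, s2 ^ i * s2 ^ i = 2 ^ i := by
    intro i; rw [← mul_pow, hss]
  have hsi : ∀ i : ℕ, Real.sqrt (2 ^ i) = s2 ^ i := by
    intro i
    exact (Real.sqrt_eq_iff_mul_self_eq (by positivity) (pow_pos hs0 i).le).mpr (h2i i).symm
  have hterm : ∀ i : ℕ, B / η i + η i * L ^ 2 * 2 ^ i + η i * L ^ 2 / 2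
      = (B / β + β) * L * s2 ^ i + β * L / 2 * (s2⁻¹) ^ i := by
    intro i
    rw [hη i, hsi i, inv_pow]
    rw [show ((2:ℝ) ^ i) = s2 ^ i * s2 ^ i from (h2i i).symm]
    have hp : (0:ℝ) < s2 ^ i := pow_pos hs0 i
    field_simp
  have hsum : ∑ i ∈ range (j + 1), (B / η i + η i * L ^ 2 * 2 ^ i + η i * L ^ 2 / 2)
      = (B / β + β) * L * (∑ i ∈ range (j + 1), s2 ^ i)
        + β * L / 2 * (∑ i ∈ range (j + 1), (s2⁻¹) ^ i) := by
    rw [Finset.mul_sum, Finset.mul_sum, ← Finset.sum_add_distrib]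
    exact Finset.sum_congr rfl fun i _ => hterm i
  have hden : (0:ℝ) < s2 - 1 := by linarith
  have hg1 : (∑ i ∈ range (j + 1), s2 ^ i) ≤ s2 / (s2 - 1) * Real.sqrt ((T:ℝ) + 1) := by
    rw [geom_sum_eq (ne_of_gt hs1) (j + 1)]
    have hsj : s2 ^ j ≤ Real.sqrt ((T:ℝ) + 1) := by
      rw [← hsi j]
      exact Real.sqrt_le_sqrt h2j
    have hnum : s2 ^ (j + 1) - 1 ≤ s2 * s2 ^ j := by
      rw [pow_succ]
      nlinarith
    have hstep1 : (s2 ^ (j + 1) - 1) / (s2 - 1) ≤ s2 * s2 ^ j / (s2 - 1) :=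
      div_le_div_of_nonneg_right hnum hden.le
    have heq2 : s2 * s2 ^ j / (s2 - 1) = s2 / (s2 - 1) * s2 ^ j := by ring
    have hstep2 : s2 / (s2 - 1) * s2 ^ j ≤ s2 / (s2 - 1) * Real.sqrt ((T:ℝ) + 1) :=
      mul_le_mul_of_nonneg_left hsj (le_of_lt (div_pos hs0 hden))
    linarith [hstep1, heq2 ▸ hstep1]
  have hg2 : (∑ i ∈ range (j + 1), (s2⁻¹) ^ i) ≤ s2 / (s2 - 1) := by
    have hinv1 : s2⁻¹ < 1 := by
      rw [inv_lt_one_iff₀]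
      right; exact hs1
    have hinv0 : (0:ℝ) < s2⁻¹ := inv_pos.mpr hs0
    rw [geom_sum_eq (ne_of_lt hinv1) (j + 1)]
    have hden2 : (0:ℝ) < 1 - s2⁻¹ := by linarith
    have heq : ((s2⁻¹) ^ (j + 1) - 1) / (s2⁻¹ - 1) = (1 - (s2⁻¹) ^ (j + 1)) / (1 - s2⁻¹) := by
      rw [← neg_div_neg_eq]
      ring_nf
    rw [heq]
    have hpnn : (0:ℝ) ≤ (s2⁻¹) ^ (j + 1) := le_of_lt (pow_pos hinv0 _)
    have h1 : (1 - (s2⁻¹) ^ (j + 1)) / (1 - s2⁻¹) ≤ 1 / (1 - s2⁻¹) :=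
      div_le_div_of_nonneg_right (by linarith) hden2.le
    have h2 : 1 / (1 - s2⁻¹) = s2 / (s2 - 1) := by
      rw [div_eq_div_iff hden2.ne' hden.ne']
      field_simp
    linarith
  have hcoef1 : 0 ≤ (B / β + β) * L :=
    mul_nonneg (add_nonneg (div_nonneg hBnn hβ.le) hβ.le) hL.le
  have hcoef2 : 0 ≤ β * L / 2 := div_nonneg (mul_nonneg hβ.le hL.le) (by norm_num)
  have hfinal : ∑ i ∈ range (j + 1), (B / η i + η i * L ^ 2 * 2 ^ i + η i * L ^ 2 / 2)
      ≤ (B / β + β) * L * (s2 / (s2 - 1) * Real.sqrt ((T:ℝ) + 1))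
        + β * L / 2 * (s2 / (s2 - 1)) := by
    rw [hsum]
    exact add_le_add (mul_le_mul_of_nonneg_left hg1 hcoef1)
      (mul_le_mul_of_nonneg_left hg2 hcoef2)
  have hring : (B / β + β) * L * (s2 / (s2 - 1) * Real.sqrt ((T:ℝ) + 1))
        + β * L / 2 * (s2 / (s2 - 1))
      = s2 / (s2 - 1) * (B / β + β) * L * Real.sqrt ((T:ℝ) + 1)
        + s2 / (s2 - 1) * (β * L) / 2 := by ring
  linarith [hRT, hfinal, hring ▸ hfinal]
end
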